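/- Let A₀ and A be separable C*-algebras and let α: A₀ → A be a semiprojective *-homomorphism. Then there are a finite set G ⊆ A and δ > 0 such that for every C*-algebra B and all *-homomorphisms φ, ψ: A → B, if ‖φ(a) − ψ(a)‖ < δ for all a ∈ G, then φ ∘ α is homotopic to ψ ∘ α. -/

import Mathlib

open Filter Topology Set
open scoped NNReal ZeroAtInfty OnePoint CStarAlgebra

noncomputable section

namespace AsymPaper

universe u v w

section Basic

variable {A : Type*} {B : Type*} {D : Type*} {A' : Type*} {A₀ : Type*}
variable [NonUnitalCStarAlgebra A] [NonUnitalCStarAlgebra B] [NonUnitalCStarAlgebra D]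
variable [NonUnitalCStarAlgebra A'] [NonUnitalCStarAlgebra A₀]

/-- An asymptotic morphism `A ⇒ B` is a family of self-adjoint (ℂ-linear and star-preserving)
maps `φ_t : A → B`, continuous in `t`, which is asymptotically multiplicative. -/
def IsAsymptoticMorphism (φ : ℝ≥0 → A → B) : Prop :=
  (∀ t, IsLinearMap ℂ (φ t)) ∧ (∀ t a, φ t (star a) = star (φ t a)) ∧
    (∀ a, Continuous fun t => φ t a) ∧
    (∀ a b : A, Tendsto (fun t => ‖φ t (a * b) - φ t a * φ t b‖) atTop (𝓝 0))

/-- Equivalence of asymptotic morphisms: `φ_t(a) - ψ_t(a) → 0` for every `a`. -/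
def AsympEquiv (φ ψ : ℝ≥0 → A → B) : Prop :=
  ∀ a, Tendsto (fun t => ‖φ t a - ψ t a‖) atTop (𝓝 0)

/-- Asymptotic homotopy of asymptotic morphisms `A ⇒ B`, witnessed by an asymptotic
morphism `A ⇒ C([0,1], B)`. -/
def AsympHomotopic (φ ψ : ℝ≥0 → A → B) : Prop :=
  ∃ θ : ℝ≥0 → A → C(unitInterval, B), IsAsymptoticMorphism θ ∧
    AsympEquiv (fun t a => θ t a 0) φ ∧ AsympEquiv (fun t a => θ t a 1) ψ

end Basic

/-- A bundled asymptotic morphism. -/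
structure AsymptoticMorphism (A : Type u) (B : Type v)
    [NonUnitalCStarAlgebra A] [NonUnitalCStarAlgebra B] : Type (max u v) where
  toFun : ℝ≥0 → A → B
  isAsymptoticMorphism : IsAsymptoticMorphism toFun

section Classes

variable {A : Type*} {B : Type*} {D : Type*} {A' : Type*} {A₀ : Type*}
variable [NonUnitalCStarAlgebra A] [NonUnitalCStarAlgebra B] [NonUnitalCStarAlgebra D]
variable [NonUnitalCStarAlgebra A'] [NonUnitalCStarAlgebra A₀]

/-- The relation of asymptotic homotopy on bundled asymptotic morphisms. -/
def AsympRel (φ ψ : AsymptoticMorphism A B) : Prop := AsympHomotopic φ.toFun ψ.toFun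

end Classes

/-- `[[A, B]]`: homotopy classes of asymptotic morphisms from `A` to `B`. -/
def AsympClass (A : Type u) (B : Type v)
    [NonUnitalCStarAlgebra A] [NonUnitalCStarAlgebra B] : Type (max u v) :=
  Quot (@AsympRel A B _ _)

section Classes2

variable {A : Type*} {B : Type*} {D : Type*} {A' : Type*} {A₀ : Type*}
variable [NonUnitalCStarAlgebra A] [NonUnitalCStarAlgebra B] [NonUnitalCStarAlgebra D]
variable [NonUnitalCStarAlgebra A'] [NonUnitalCStarAlgebra A₀]

/-- `[[φ]]`, the asymptotic homotopy class of an asymptotic morphism. -/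
def AsympClass.mk (φ : AsymptoticMorphism A B) : AsympClass A B := Quot.mk _ φ

/-- A ⋆-homomorphism viewed as a (constant) family of maps. -/
def constFun (f : A →⋆ₙₐ[ℂ] B) : ℝ≥0 → A → B := fun _ a => f a

theorem isAsymptoticMorphism_constFun (f : A →⋆ₙₐ[ℂ] B) :
    IsAsymptoticMorphism (constFun f) := by
  refine ⟨fun t => ⟨fun x y => map_add f x y, fun c x => map_smul f c x⟩,
    fun t a => map_star f a, fun a => continuous_const, fun a b => ?_⟩
  simp only [constFun, map_mul, sub_self, norm_zero]
  exact tendsto_const_nhds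

/-- A ⋆-homomorphism viewed as a (constant) asymptotic morphism. -/
def constAM (f : A →⋆ₙₐ[ℂ] B) : AsymptoticMorphism A B :=
  ⟨constFun f, isAsymptoticMorphism_constFun f⟩

/-- The class `[[f]] ∈ [[A, B]]` of a ⋆-homomorphism. -/
def constClass (f : A →⋆ₙₐ[ℂ] B) : AsympClass A B := AsympClass.mk (constAM f)

/-- Precomposition of a family of maps with a ⋆-homomorphism. -/
def compHomFun {B : Type*} (φ : ℝ≥0 → A → B) (γ : A' →⋆ₙₐ[ℂ] A) : ℝ≥0 → A' → B :=
  fun t a => φ t (γ a)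

theorem IsAsymptoticMorphism.compHomFun {φ : ℝ≥0 → A → B} (hφ : IsAsymptoticMorphism φ)
    (γ : A' →⋆ₙₐ[ℂ] A) : IsAsymptoticMorphism (AsymPaper.compHomFun φ γ) := by
  obtain ⟨h1, h2, h3, h4⟩ := hφ
  refine ⟨fun t => ⟨fun x y => ?_, fun c x => ?_⟩, fun t a => ?_, fun a => h3 (γ a),
    fun a b => ?_⟩
  · show φ t (γ (x + y)) = φ t (γ x) + φ t (γ y)
    rw [map_add]; exact (h1 t).map_add _ _
  · show φ t (γ (c • x)) = c • φ t (γ x)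
    rw [map_smul]; exact (h1 t).map_smul _ _
  · show φ t (γ (star a)) = star (φ t (γ a))
    rw [map_star]; exact h2 t _
  · show Tendsto (fun t => ‖φ t (γ (a * b)) - φ t (γ a) * φ t (γ b)‖) atTop (𝓝 0)
    simpa only [map_mul] using h4 (γ a) (γ b)

theorem AsympHomotopic.compHomFun {φ ψ : ℝ≥0 → A → B} (h : AsympHomotopic φ ψ)
    (γ : A' →⋆ₙₐ[ℂ] A) :
    AsympHomotopic (AsymPaper.compHomFun φ γ) (AsymPaper.compHomFun ψ γ) := by
  obtain ⟨θ, hθ, h0, h1⟩ := h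
  exact ⟨AsymPaper.compHomFun θ γ, hθ.compHomFun γ, fun a => h0 (γ a), fun a => h1 (γ a)⟩

/-- Precomposition of an asymptotic morphism with a ⋆-homomorphism. -/
def AsymptoticMorphism.compHom (φ : AsymptoticMorphism A B) (γ : A' →⋆ₙₐ[ℂ] A) :
    AsymptoticMorphism A' B :=
  ⟨AsymPaper.compHomFun φ.toFun γ, φ.isAsymptoticMorphism.compHomFun γ⟩

/-- The map `[[A, B]] → [[A', B]]` induced by precomposition with a ⋆-homomorphism. -/
def compClassMap (γ : A' →⋆ₙₐ[ℂ] A) : AsympClass A B → AsympClass A' B :=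
  Quot.lift (fun φ => AsympClass.mk (φ.compHom γ))
    (fun φ ψ h => Quot.sound (AsympHomotopic.compHomFun h γ))

/-- Postcomposition of a family of maps with a ⋆-homomorphism. -/
def postHomFun {A : Type*} (ψ : B →⋆ₙₐ[ℂ] D) (φ : ℝ≥0 → A → B) : ℝ≥0 → A → D :=
  fun t a => ψ (φ t a)

theorem IsAsymptoticMorphism.postHomFun {φ : ℝ≥0 → A → B} (hφ : IsAsymptoticMorphism φ)
    (ψ : B →⋆ₙₐ[ℂ] D) : IsAsymptoticMorphism (AsymPaper.postHomFun ψ φ) := by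
  obtain ⟨h1, h2, h3, h4⟩ := hφ
  refine ⟨fun t => ⟨fun x y => ?_, fun c x => ?_⟩, fun t a => ?_,
    fun a => (map_continuous ψ).comp (h3 a), fun a b => ?_⟩
  · show ψ (φ t (x + y)) = ψ (φ t x) + ψ (φ t y)
    rw [(h1 t).map_add, map_add]
  · show ψ (φ t (c • x)) = c • ψ (φ t x)
    rw [(h1 t).map_smul, map_smul]
  · show ψ (φ t (star a)) = star (ψ (φ t a))
    rw [h2, map_star]
  · refine squeeze_zero (fun t => norm_nonneg _) (fun t => ?_) (h4 a b)
    show ‖ψ (φ t (a * b)) - ψ (φ t a) * ψ (φ t b)‖ ≤ _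
    rw [← map_mul, ← map_sub]
    exact NonUnitalStarAlgHom.norm_apply_le ψ _

theorem AsympEquiv.postHomFun {φ φ' : ℝ≥0 → A → B} (h : AsympEquiv φ φ')
    (ψ : B →⋆ₙₐ[ℂ] D) : AsympEquiv (AsymPaper.postHomFun ψ φ) (AsymPaper.postHomFun ψ φ') := by
  intro a
  refine squeeze_zero (fun t => norm_nonneg _) (fun t => ?_) (h a)
  show ‖ψ (φ t a) - ψ (φ' t a)‖ ≤ _
  rw [← map_sub]
  exact NonUnitalStarAlgHom.norm_apply_le ψ _

/-- Pointwise postcomposition on continuous maps, as a ⋆-homomorphism. -/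
def cmPostHom {X : Type*} [TopologicalSpace X] (ψ : B →⋆ₙₐ[ℂ] D) :
    C(X, B) →⋆ₙₐ[ℂ] C(X, D) where
  toFun f := ⟨fun x => ψ (f x), (map_continuous ψ).comp f.continuous⟩
  map_smul' c f := by ext x; simp
  map_zero' := by ext x; simp
  map_add' f g := by ext x; simp
  map_mul' f g := by ext x; simp
  map_star' f := by ext x; simp [map_star]

theorem AsympHomotopic.postHomFun {φ φ' : ℝ≥0 → A → B} (h : AsympHomotopic φ φ')
    (ψ : B →⋆ₙₐ[ℂ] D) :
    AsympHomotopic (AsymPaper.postHomFun ψ φ) (AsymPaper.postHomFun ψ φ') := by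
  obtain ⟨θ, hθ, h0, h1⟩ := h
  exact ⟨AsymPaper.postHomFun (cmPostHom ψ) θ, hθ.postHomFun _,
    fun a => AsympEquiv.postHomFun h0 ψ a, fun a => AsympEquiv.postHomFun h1 ψ a⟩

/-- The map `[[A, B]] → [[A, D]]` induced by postcomposition with a ⋆-homomorphism. -/
def postClassMap (ψ : B →⋆ₙₐ[ℂ] D) : AsympClass A B → AsympClass A D :=
  Quot.lift
    (fun φ => AsympClass.mk ⟨AsymPaper.postHomFun ψ φ.toFun, φ.isAsymptoticMorphism.postHomFun ψ⟩)
    (fun φ φ' h => Quot.sound (AsympHomotopic.postHomFun h ψ))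

/-- Genuine homotopy of ⋆-homomorphisms. -/
def HomHomotopic (φ ψ : A →⋆ₙₐ[ℂ] B) : Prop :=
  ∃ H : A →⋆ₙₐ[ℂ] C(unitInterval, B), (∀ a, H a 0 = φ a) ∧ (∀ a, H a 1 = ψ a)

/-- The relation on ⋆-homomorphisms of being asymptotically homotopic
(as constant asymptotic morphisms). -/
def HRel (f g : A →⋆ₙₐ[ℂ] B) : Prop := AsympHomotopic (constFun f) (constFun g)

/-- The point-norm topology on the space of ⋆-homomorphisms. -/
instance homTopology : TopologicalSpace (A →⋆ₙₐ[ℂ] B) :=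
  TopologicalSpace.induced (fun f => (f : A → B)) inferInstance

end Classes2

/-- `H(A, B)`: the image of `Hom(A,B)` in `[[A,B]]`, realized as the quotient of `Hom(A, B)` by
asymptotic homotopy; it carries the quotient topology coming from the point-norm topology. -/
def HClass (A : Type u) (B : Type v) [NonUnitalCStarAlgebra A] [NonUnitalCStarAlgebra B] :
    Type (max u v) :=
  Quot (@HRel A B _ _)

section Classes3

variable {A : Type*} {B : Type*} {D : Type*} {A' : Type*} {A₀ : Type*}
variable [NonUnitalCStarAlgebra A] [NonUnitalCStarAlgebra B] [NonUnitalCStarAlgebra D]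
variable [NonUnitalCStarAlgebra A'] [NonUnitalCStarAlgebra A₀]

instance HClass.instTopologicalSpace (A : Type u) (B : Type v)
    [NonUnitalCStarAlgebra A] [NonUnitalCStarAlgebra B] : TopologicalSpace (HClass A B) :=
  inferInstanceAs (TopologicalSpace (Quot (@HRel A B _ _)))

/-- The class in `H(A, B)` of a ⋆-homomorphism. -/
def HClass.mk (f : A →⋆ₙₐ[ℂ] B) : HClass A B := Quot.mk _ f

/-- The map `H(A, B) → H(A', B)` induced by precomposition with a ⋆-homomorphism. -/
def hcompClassMap (γ : A' →⋆ₙₐ[ℂ] A) : HClass A B → HClass A' B :=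
  Quot.lift (fun f => HClass.mk (f.comp γ))
    (fun f g h => Quot.sound (AsympHomotopic.compHomFun h γ))

/-- The zero ⋆-homomorphism. -/
def zeroHom (A B : Type*) [NonUnitalCStarAlgebra A] [NonUnitalCStarAlgebra B] :
    A →⋆ₙₐ[ℂ] B where
  toFun _ := 0
  map_smul' _ _ := by simp
  map_zero' := rfl
  map_add' _ _ := by simp
  map_mul' _ _ := by simp
  map_star' _ := by simp

end Classes3

section Systems

/-- The transition maps of an inductive system. -/
def transit {A : ℕ → Type u} [∀ n, NonUnitalCStarAlgebra (A n)]
    (α : ∀ n, A n →⋆ₙₐ[ℂ] A (n + 1)) {n m : ℕ} (hnm : n ≤ m) (a : A n) : A m :=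
  Nat.leRecOn hnm (fun {k} x => α k x) a

/-- `(L, ι)` is the inductive limit of the system `(A, α)`: the maps are compatible, the union of
their ranges is dense, and the norm of `ι n a` is the limit of the norms along the system. -/
def IsInductiveLimit {A : ℕ → Type u} [∀ n, NonUnitalCStarAlgebra (A n)]
    (α : ∀ n, A n →⋆ₙₐ[ℂ] A (n + 1)) (L : Type v) [NonUnitalCStarAlgebra L]
    (ι : ∀ n, A n →⋆ₙₐ[ℂ] L) : Prop :=
  (∀ n, (ι (n + 1)).comp (α n) = ι n) ∧
    Dense (⋃ n, Set.range (ι n)) ∧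
    ∀ (n : ℕ) (a : A n),
      Tendsto (fun m => ‖transit α (Nat.le_add_right n m) a‖) atTop (𝓝 ‖ι n a‖)

/-- A ⋆-homomorphism `α : A₀ → A` is semiprojective if for every inductive system with surjective
connecting maps and limit `L` and every ⋆-homomorphism `φ : A → L`, the composition `φ ∘ α`
lifts to some finite stage of the system. -/
def IsSemiprojective.{w₁, u₁, v₁} {A₀ : Type u₁} {A : Type v₁}
    [NonUnitalCStarAlgebra A₀] [NonUnitalCStarAlgebra A] (α : A₀ →⋆ₙₐ[ℂ] A) : Prop :=
  ∀ (B : ℕ → Type w₁) [∀ n, NonUnitalCStarAlgebra (B n)]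
    (β : ∀ n, B n →⋆ₙₐ[ℂ] B (n + 1)) (L : Type w₁) [NonUnitalCStarAlgebra L]
    (ι : ∀ n, B n →⋆ₙₐ[ℂ] L),
    (∀ n, Function.Surjective (β n)) → IsInductiveLimit β L ι →
      ∀ φ : A →⋆ₙₐ[ℂ] L, ∃ (n : ℕ) (ψ : A₀ →⋆ₙₐ[ℂ] B n), (ι n).comp ψ = φ.comp α

end Systems

/-- A separable C⋆-algebra together with a semiprojective ⋆-homomorphism into `A`. -/
structure SemiprojectivePair (A : Type u) [NonUnitalCStarAlgebra A] : Type (u + 1) where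
  carrier : Type u
  [inst : NonUnitalCStarAlgebra carrier]
  [sep : TopologicalSpace.SeparableSpace carrier]
  hom : carrier →⋆ₙₐ[ℂ] A
  semiproj : IsSemiprojective.{u} hom

attribute [instance] SemiprojectivePair.inst SemiprojectivePair.sep

/-- A bundled separable C⋆-algebra. -/
structure SeparableCStarAlgebra : Type (u + 1) where
  carrier : Type u
  [inst : NonUnitalCStarAlgebra carrier]
  [sep : TopologicalSpace.SeparableSpace carrier]

attribute [instance] SeparableCStarAlgebra.inst SeparableCStarAlgebra.sep

section Pullback

variable {A : Type u} {A' : Type*} {B : Type v}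
variable [NonUnitalCStarAlgebra A] [NonUnitalCStarAlgebra A'] [NonUnitalCStarAlgebra B]

/-- For a semiprojective `γ : A' → A`, every class in `[[A, B]]` composed with `γ` is represented
by a genuine ⋆-homomorphism; `pullbackH γ` sends the class to the corresponding element of
`H(A', B)`.  (For non-semiprojective `γ` the junk value `0` is used when no representative
exists.) -/
def pullbackH (γ : A' →⋆ₙₐ[ℂ] A) (x : AsympClass A B) : HClass A' B :=
  @dite _ (∃ f : A' →⋆ₙₐ[ℂ] B, compClassMap γ x = constClass f) (Classical.propDecidable _)
    (fun h => HClass.mk h.choose) (fun _ => HClass.mk (zeroHom A' B))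

end Pullback

/-- The topology on `[[A, B]]`: the weakest topology making `pullbackH α : [[A,B]] → H(A₀,B)`
continuous for every separable C⋆-algebra `A₀` and every semiprojective `α : A₀ → A`. -/
instance AsympClass.topologicalSpace (A : Type u) (B : Type v)
    [NonUnitalCStarAlgebra A] [NonUnitalCStarAlgebra B] :
    TopologicalSpace (AsympClass A B) :=
  ⨅ P : SemiprojectivePair A,
    TopologicalSpace.induced (pullbackH (B := B) P.hom) inferInstance



section InvLim

/-- The inverse (projective) limit of a sequence of spaces, as a subspace of the product. -/
def InvLim (X : ℕ → Type w) (g : ∀ n, X (n + 1) → X n) : Type w :=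
  { x : ∀ n, X n // ∀ n, g n (x (n + 1)) = x n }

instance InvLim.instTopologicalSpace (X : ℕ → Type w) [∀ n, TopologicalSpace (X n)]
    (g : ∀ n, X (n + 1) → X n) : TopologicalSpace (InvLim X g) :=
  inferInstanceAs (TopologicalSpace { x : ∀ n, X n // ∀ n, g n (x (n + 1)) = x n })

end InvLim

section HLim

variable {A : ℕ → Type u} [∀ n, NonUnitalCStarAlgebra (A n)]
variable {B : ℕ → Type v} [∀ n, NonUnitalCStarAlgebra (B n)]
variable {L : Type w} [NonUnitalCStarAlgebra L]

/-- The defining formula for the homotopy limit of a strong homotopy morphism of inductive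
systems: for `a ∈ A n` and `m ≤ t < m + 1` (with `m ≥ n`) the value is
`ι_{f(m+1)} (h_m (α_{m,n} a) (t - m))`. -/
def hLimFormula (α : ∀ n, A n →⋆ₙₐ[ℂ] A (n + 1)) (ιB : ∀ n, B n →⋆ₙₐ[ℂ] L) (f : ℕ → ℕ)
    (h : ∀ n, A n →⋆ₙₐ[ℂ] C(unitInterval, B (f (n + 1)))) (n : ℕ) (a : A n) (t : ℝ≥0) : L :=
  ιB (f (max n ⌊(t : ℝ)⌋₊ + 1))
    (h (max n ⌊(t : ℝ)⌋₊) (transit α (le_max_left n ⌊(t : ℝ)⌋₊) a)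
      (Set.projIcc (0 : ℝ) 1 zero_le_one ((t : ℝ) - (max n ⌊(t : ℝ)⌋₊ : ℕ))))

/-- `φ` is (a representative of) the homotopy limit of the strong homotopy morphism given by
`(f, φ_n, h_n)`: it is an asymptotic morphism agreeing asymptotically with the defining formula
on each `A n`. -/
def IsHomotopyLimit (α : ∀ n, A n →⋆ₙₐ[ℂ] A (n + 1)) {AL : Type*} [NonUnitalCStarAlgebra AL]
    (ιA : ∀ n, A n →⋆ₙₐ[ℂ] AL) (ιB : ∀ n, B n →⋆ₙₐ[ℂ] L) (f : ℕ → ℕ)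
    (h : ∀ n, A n →⋆ₙₐ[ℂ] C(unitInterval, B (f (n + 1)))) (φ : ℝ≥0 → AL → L) : Prop :=
  IsAsymptoticMorphism φ ∧
    ∀ (n : ℕ) (a : A n),
      Tendsto (fun t => ‖φ t (ιA n a) - hLimFormula α ιB f h n a t‖) atTop (𝓝 0)

end HLim

section CH

variable {A : Type u} {B : Type v} {D : Type w}
variable [NonUnitalCStarAlgebra A] [NonUnitalCStarAlgebra B] [NonUnitalCStarAlgebra D]

/-- An (increasing) reparametrization: a homeomorphism of `[0, ∞)`. -/
def IsReparam (r : ℝ≥0 → ℝ≥0) : Prop := ∃ e : ℝ≥0 ≃ₜ ℝ≥0, (e : ℝ≥0 → ℝ≥0) = r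

/-- The composition `(ψ_{r(t)} ∘ φ_t)_t` of two families along a reparametrization `r`. -/
def compAlong (ψ : ℝ≥0 → B → D) (r : ℝ≥0 → ℝ≥0) (φ : ℝ≥0 → A → B) : ℝ≥0 → A → D :=
  fun t a => ψ (r t) (φ t a)

/-- `F` is the Connes–Higson composition `[[A,B]] × [[B,D]] → [[A,D]]`: for all representatives
`φ, ψ` there is `r₀` such that for every reparametrization `r ≥ r₀`, the family
`(ψ_{r(t)} ∘ φ_t)_t` is an asymptotic morphism whose class is `F [[φ]] [[ψ]]`. -/
def IsCHComposition (F : AsympClass A B → AsympClass B D → AsympClass A D) : Prop :=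
  ∀ (φ : AsymptoticMorphism A B) (ψ : AsymptoticMorphism B D),
    ∃ r₀ : ℝ≥0 → ℝ≥0, ∀ r : ℝ≥0 → ℝ≥0, IsReparam r → (∀ t, r₀ t ≤ r t) →
      ∃ hr : IsAsymptoticMorphism (compAlong ψ.toFun r φ.toFun),
        F (AsympClass.mk φ) (AsympClass.mk ψ) = AsympClass.mk ⟨compAlong ψ.toFun r φ.toFun, hr⟩

end CH

section Ev

/-- Evaluation at a point, as a ⋆-homomorphism `C(X, B) → B`. -/
def evCM (X : Type w) [TopologicalSpace X] [CompactSpace X]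
    (B : Type v) [NonUnitalCStarAlgebra B] (x : X) : C(X, B) →⋆ₙₐ[ℂ] B where
  toFun f := f x
  map_smul' _ _ := rfl
  map_zero' := rfl
  map_add' _ _ := rfl
  map_mul' _ _ := rfl
  map_star' _ := rfl

end Ev

end AsymPaper


open AsymPaper Filter Topology TopologicalSpace
open scoped NNReal ZeroAtInfty OnePoint CStarAlgebra

universe u v w


namespace Stmt3Aux

set_option maxHeartbeats 1000000
set_option synthInstance.maxHeartbeats 400000

open AsymPaper Filter Topology TopologicalSpace
open scoped ENNReal NNReal


/-! ### Straight-line paths -/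

noncomputable def lineco (t : unitInterval) : ℂ := ((t : ℝ) : ℂ)

theorem norm_lineco (t : unitInterval) : ‖lineco t‖ = (t : ℝ) := by
  rw [lineco, Complex.norm_real, Real.norm_eq_abs, abs_of_nonneg t.2.1]

theorem norm_one_sub_lineco (t : unitInterval) : ‖1 - lineco t‖ = 1 - (t : ℝ) := by
  rw [show 1 - lineco t = (((1 - (t:ℝ)):ℝ):ℂ) by rw [lineco]; push_cast; ring,
    Complex.norm_real, Real.norm_eq_abs, abs_of_nonneg (sub_nonneg.2 t.2.2)]

noncomputable def lineCM {B : Type*} [NonUnitalCStarAlgebra B] (x y : B) : C(unitInterval, B) where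
  toFun t := (1 - lineco t) • x + lineco t • y
  continuous_toFun := by unfold lineco; fun_prop

theorem lineCM_apply {B : Type*} [NonUnitalCStarAlgebra B] (x y : B) (t : unitInterval) :
    lineCM x y t = (1 - lineco t) • x + lineco t • y := rfl

theorem lineCM_zero {B : Type*} [NonUnitalCStarAlgebra B] (x y : B) : lineCM x y 0 = x := by
  simp [lineCM, lineco]

theorem lineCM_one {B : Type*} [NonUnitalCStarAlgebra B] (x y : B) : lineCM x y 1 = y := by
  simp [lineCM, lineco]

theorem lineCM_zero_zero {B : Type*} [NonUnitalCStarAlgebra B] : lineCM (0 : B) 0 = 0 := by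
  ext t; simp [lineCM_apply]

theorem norm_lineCM_le {B : Type*} [NonUnitalCStarAlgebra B] (x y : B) :
    ‖lineCM x y‖ ≤ max ‖x‖ ‖y‖ := by
  have h0 : (0:ℝ) ≤ max ‖x‖ ‖y‖ := le_max_iff.2 (Or.inl (norm_nonneg x))
  refine (ContinuousMap.norm_le _ h0).2 fun t => ?_
  calc ‖lineCM x y t‖ ≤ ‖(1 - lineco t) • x‖ + ‖lineco t • y‖ := norm_add_le _ _
    _ = (1 - (t:ℝ)) * ‖x‖ + (t:ℝ) * ‖y‖ := by
        rw [norm_smul, norm_smul, norm_lineco, norm_one_sub_lineco]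
    _ ≤ (1 - (t:ℝ)) * max ‖x‖ ‖y‖ + (t:ℝ) * max ‖x‖ ‖y‖ := by
        gcongr
        · exact sub_nonneg.2 t.2.2
        · exact le_max_left _ _
        · exact unitInterval.nonneg t
        · exact le_max_right _ _
    _ = max ‖x‖ ‖y‖ := by ring

theorem lineCM_sub {B : Type*} [NonUnitalCStarAlgebra B] (x y u v : B) :
    lineCM x y - lineCM u v = lineCM (x - u) (y - v) := by
  ext t
  show lineCM x y t - lineCM u v t = _
  simp only [lineCM_apply]
  module

theorem lineCM_add {B : Type*} [NonUnitalCStarAlgebra B] (x y u v : B) :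
    lineCM (x + u) (y + v) = lineCM x y + lineCM u v := by
  ext t
  show _ = lineCM x y t + lineCM u v t
  simp only [lineCM_apply]
  module

theorem lineCM_smul {B : Type*} [NonUnitalCStarAlgebra B] (c : ℂ) (x y : B) :
    lineCM (c • x) (c • y) = c • lineCM x y := by
  ext t
  show _ = c • (lineCM x y t)
  simp only [lineCM_apply]
  module

theorem lineCM_star {B : Type*} [NonUnitalCStarAlgebra B] (x y : B) :
    lineCM (star x) (star y) = star (lineCM x y) := by
  ext t
  show _ = star (lineCM x y t)
  simp only [lineCM_apply, star_add, star_smul, RCLike.star_def, map_sub, map_one,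
    Complex.conj_ofReal, lineco]

theorem norm_lineCM_mul {B : Type*} [NonUnitalCStarAlgebra B] (x y u v : B) :
    ‖lineCM x y * lineCM u v - lineCM (x * u) (y * v)‖ ≤ ‖x - y‖ * ‖u - v‖ := by
  have h0 : (0:ℝ) ≤ ‖x - y‖ * ‖u - v‖ := mul_nonneg (norm_nonneg _) (norm_nonneg _)
  refine (ContinuousMap.norm_le _ h0).2 fun t => ?_
  set s : ℂ := lineco t with hs
  have key : (lineCM x y * lineCM u v - lineCM (x*u) (y*v)) t
      = -((s * (1 - s)) • ((x - y) * (u - v))) := by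
    show (lineCM x y t) * (lineCM u v t) - lineCM (x*u) (y*v) t = _
    simp only [lineCM_apply, ← hs]
    simp only [mul_sub, sub_mul, add_mul, mul_add, smul_mul_smul_comm]
    module
  rw [key, norm_neg, norm_smul]
  have hb : ‖s * (1 - s)‖ ≤ 1 := by
    rw [norm_mul, hs, norm_lineco, norm_one_sub_lineco]
    nlinarith [t.2.1, t.2.2]
  calc ‖s*(1-s)‖ * ‖(x-y)*(u-v)‖ ≤ 1 * ‖(x-y)*(u-v)‖ := by gcongr
    _ = ‖(x-y)*(u-v)‖ := one_mul _
    _ ≤ ‖x-y‖*‖u-v‖ := norm_mul_le _ _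

/-! ### A closedness criterion -/

theorem isClosed_tendstoZero {E : Type*} [PseudoMetricSpace E] (h : ℕ → E → ℝ) (K : ℝ)
    (hK : 0 < K) (hlip : ∀ m z w, h m z ≤ h m w + K * dist z w) (h0 : ∀ m z, 0 ≤ h m z) :
    IsClosed {z : E | Tendsto (fun m => h m z) atTop (𝓝 0)} := by
  refine isClosed_of_closure_subset fun z hz => ?_
  rw [Set.mem_setOf_eq, Metric.tendsto_atTop]
  intro ε hε
  obtain ⟨w, hwS, hwz⟩ := Metric.mem_closure_iff.1 hz (ε/(2*K)) (by positivity)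
  rw [Set.mem_setOf_eq, Metric.tendsto_atTop] at hwS
  obtain ⟨N, hN⟩ := hwS (ε/2) (by positivity)
  refine ⟨N, fun m hm => ?_⟩
  have h1 : h m w < ε/2 := by
    have := hN m hm; rwa [Real.dist_eq, sub_zero, abs_of_nonneg (h0 m w)] at this
  have h2 : h m z ≤ h m w + K * dist z w := hlip m z w
  have h3 : K * dist z w ≤ K * (ε/(2*K)) := mul_le_mul_of_nonneg_left hwz.le hK.le
  rw [Real.dist_eq, sub_zero, abs_of_nonneg (h0 m z)]
  have h4 : K * (ε/(2*K)) = ε/2 := by field_simp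
  linarith

/-! ### lp coordinate lemmas -/

section LpApply

variable {E : ℕ → Type u} [∀ i, NonUnitalCStarAlgebra (E i)]

@[simp] theorem lp_mul_apply (f g : lp E ⊤) (m : ℕ) : (f * g) m = f m * g m := by
  rw [lp.infty_coeFn_mul]; rfl

@[simp] theorem lp_add_apply (f g : lp E ⊤) (m : ℕ) : (f + g) m = f m + g m := by
  rw [lp.coeFn_add]; rfl

@[simp] theorem lp_sub_apply (f g : lp E ⊤) (m : ℕ) : (f - g) m = f m - g m := by
  rw [lp.coeFn_sub]; rfl

@[simp] theorem lp_smul_apply (c : ℂ) (f : lp E ⊤) (m : ℕ) : (c • f) m = c • f m := by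
  rw [lp.coeFn_smul]; rfl

@[simp] theorem lp_star_apply (f : lp E ⊤) (m : ℕ) : (star f) m = star (f m) := by
  rw [lp.coeFn_star]; rfl

@[simp] theorem lp_zero_apply (m : ℕ) : (0 : lp E ⊤) m = 0 := by
  rw [lp.coeFn_zero]; rfl

theorem norm_lp_apply_le (f : lp E ⊤) (m : ℕ) : ‖f m‖ ≤ ‖f‖ :=
  lp.norm_apply_le_norm (by norm_num) f m

theorem continuous_lpApply (m : ℕ) : Continuous fun f : lp E ⊤ => f m := by
  refine (LipschitzWith.of_dist_le_mul (K := 1) fun f g => ?_).continuous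
  rw [NNReal.coe_one, one_mul, dist_eq_norm, dist_eq_norm]
  calc ‖f m - g m‖ = ‖(f - g) m‖ := by rw [lp_sub_apply]
    _ ≤ ‖f - g‖ := norm_lp_apply_le _ _

end LpApply

/-! ### The construction -/

section Construction

variable (Bn : ℕ → Type u) [∀ n, NonUnitalCStarAlgebra (Bn n)]

abbrev PB : Type u := lp (fun n => Bn n) ⊤
abbrev PC : Type u := lp (fun n => C(unitInterval, Bn n)) ⊤
abbrev Amb : Type u := (PB Bn × PB Bn) × PC Bn

instance pinSubring1 : NonUnitalSubringClass
    (NonUnitalStarSubalgebra ℂ (PB Bn × PB Bn)) (PB Bn × PB Bn) := by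
  exact @NonUnitalStarSubalgebra.instNonUnitalSubringClass ℂ (PB Bn × PB Bn) _ _ _ _

instance pinSubring2 : NonUnitalSubringClass
    (NonUnitalStarSubalgebra ℂ (Amb Bn)) (Amb Bn) := by
  exact @NonUnitalStarSubalgebra.instNonUnitalSubringClass ℂ (Amb Bn) _ _ _ _

theorem norm_le_add_sub {B : Type*} [SeminormedAddCommGroup B] (a b : B) :
    ‖a‖ ≤ ‖b‖ + ‖a - b‖ := by
  have e : b + (a - b) = a := by abel
  calc ‖a‖ = ‖b + (a - b)‖ := by rw [e]
    _ ≤ ‖b‖ + ‖a - b‖ := norm_add_le _ _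


section DistHelpers

variable (Bn : ℕ → Type u) [∀ n, NonUnitalCStarAlgebra (Bn n)]

theorem dist_x_le (z w : Amb Bn) (m : ℕ) : ‖z.1.1 m - w.1.1 m‖ ≤ dist z w := by
  calc ‖z.1.1 m - w.1.1 m‖ = ‖(z.1.1 - w.1.1) m‖ := by rw [lp_sub_apply]
    _ ≤ ‖z.1.1 - w.1.1‖ := norm_lp_apply_le _ _
    _ = dist z.1.1 w.1.1 := (dist_eq_norm _ _).symm
    _ ≤ dist z.1 w.1 := by rw [Prod.dist_eq]; exact le_max_left _ _
    _ ≤ dist z w := by rw [Prod.dist_eq]; exact le_max_left _ _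

theorem dist_y_le (z w : Amb Bn) (m : ℕ) : ‖z.1.2 m - w.1.2 m‖ ≤ dist z w := by
  calc ‖z.1.2 m - w.1.2 m‖ = ‖(z.1.2 - w.1.2) m‖ := by rw [lp_sub_apply]
    _ ≤ ‖z.1.2 - w.1.2‖ := norm_lp_apply_le _ _
    _ = dist z.1.2 w.1.2 := (dist_eq_norm _ _).symm
    _ ≤ dist z.1 w.1 := by rw [Prod.dist_eq]; exact le_max_right _ _
    _ ≤ dist z w := by rw [Prod.dist_eq]; exact le_max_left _ _

theorem dist_f_le (z w : Amb Bn) (m : ℕ) : ‖z.2 m - w.2 m‖ ≤ dist z w := by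
  calc ‖z.2 m - w.2 m‖ = ‖(z.2 - w.2) m‖ := by rw [lp_sub_apply]
    _ ≤ ‖z.2 - w.2‖ := norm_lp_apply_le _ _
    _ = dist z.2 w.2 := (dist_eq_norm _ _).symm
    _ ≤ dist z w := by rw [Prod.dist_eq]; exact le_max_right _ _

theorem dist_pb_fst_le (z w : PB Bn × PB Bn) (m : ℕ) : ‖z.1 m - w.1 m‖ ≤ dist z w := by
  calc ‖z.1 m - w.1 m‖ = ‖(z.1 - w.1) m‖ := by rw [lp_sub_apply]
    _ ≤ ‖z.1 - w.1‖ := norm_lp_apply_le _ _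
    _ = dist z.1 w.1 := (dist_eq_norm _ _).symm
    _ ≤ dist z w := by rw [Prod.dist_eq]; exact le_max_left _ _

theorem dist_pb_snd_le (z w : PB Bn × PB Bn) (m : ℕ) : ‖z.2 m - w.2 m‖ ≤ dist z w := by
  calc ‖z.2 m - w.2 m‖ = ‖(z.2 - w.2) m‖ := by rw [lp_sub_apply]
    _ ≤ ‖z.2 - w.2‖ := norm_lp_apply_le _ _
    _ = dist z.2 w.2 := (dist_eq_norm _ _).symm
    _ ≤ dist z w := by rw [Prod.dist_eq]; exact le_max_right _ _

end DistHelpers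

/-- The limit algebra: pairs of bounded sequences which agree at infinity. -/
noncomputable def Lsub : NonUnitalStarSubalgebra ℂ (PB Bn × PB Bn) where
  carrier := {p | Tendsto (fun m => ‖p.1 m - p.2 m‖) atTop (𝓝 0)}
  zero_mem' := by
    simp only [Set.mem_setOf_eq, Prod.fst_zero, Prod.snd_zero, lp_zero_apply, sub_zero,
      norm_zero]
    exact tendsto_const_nhds
  add_mem' := by
    intro z w hz hw
    have h := hz.add hw
    rw [add_zero] at h
    refine squeeze_zero (fun m => norm_nonneg _) (fun m => ?_) h
    simp only [Prod.fst_add, Prod.snd_add, lp_add_apply]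
    refine le_trans (le_of_eq (congrArg norm ?_)) (norm_add_le _ _)
    abel
  mul_mem' := by
    intro z w hz hw
    have h := (hz.mul_const ‖w.1‖).add (hw.const_mul ‖z.2‖)
    rw [zero_mul, mul_zero, add_zero] at h
    refine squeeze_zero (fun m => norm_nonneg _) (fun m => ?_) h
    simp only [Prod.fst_mul, Prod.snd_mul, lp_mul_apply]
    have e : z.1 m * w.1 m - z.2 m * w.2 m
        = (z.1 m - z.2 m) * w.1 m + z.2 m * (w.1 m - w.2 m) := by
      rw [sub_mul, mul_sub]; abel
    rw [e]
    refine le_trans (norm_add_le _ _) (add_le_add ?_ ?_)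
    · exact le_trans (norm_mul_le _ _) (by gcongr; exact norm_lp_apply_le _ _)
    · exact le_trans (norm_mul_le _ _) (by gcongr; exact norm_lp_apply_le _ _)
  smul_mem' := by
    intro c z hz
    have h := hz.const_mul ‖c‖
    rw [mul_zero] at h
    refine squeeze_zero (fun m => norm_nonneg _) (fun m => ?_) h
    simp only [Prod.smul_fst, Prod.smul_snd, lp_smul_apply, ← smul_sub, norm_smul]
    exact le_rfl
  star_mem' := by
    intro z hz
    refine hz.congr fun m => ?_
    simp only [Prod.fst_star, Prod.snd_star, lp_star_apply, ← star_sub, norm_star]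

instance isClosed_Lsub : IsClosed ((Lsub Bn : Set (PB Bn × PB Bn))) := by
  show IsClosed {p : PB Bn × PB Bn | Tendsto (fun m => ‖p.1 m - p.2 m‖) atTop (𝓝 0)}
  refine isClosed_tendstoZero (fun (m : ℕ) (p : PB Bn × PB Bn) => ‖p.1 m - p.2 m‖) 2 two_pos
    (fun m z w => ?_) (fun m z => norm_nonneg _)
  show ‖z.1 m - z.2 m‖ ≤ ‖w.1 m - w.2 m‖ + 2 * dist z w
  refine le_trans (norm_le_add_sub _ (w.1 m - w.2 m)) ?_
  have e : z.1 m - z.2 m - (w.1 m - w.2 m) = (z.1 m - w.1 m) - (z.2 m - w.2 m) := by abel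
  rw [e]
  have h1 := dist_pb_fst_le Bn z w m
  have h2 := dist_pb_snd_le Bn z w m
  have := norm_sub_le (z.1 m - w.1 m) (z.2 m - w.2 m)
  linarith

/-- the stage-`n` conditions -/
def DCond (n : ℕ) (z : Amb Bn) : Prop :=
  (∀ m, n ≤ m → ((z.2 m) 0 = z.1.1 m ∧ (z.2 m) 1 = z.1.2 m)) ∧
  (∀ m, m < n → z.2 m = 0) ∧
  Tendsto (fun m => ‖z.1.1 m - z.1.2 m‖) atTop (𝓝 0) ∧
  Tendsto (fun m => ‖z.2 m - lineCM (z.1.1 m) (z.1.2 m)‖) atTop (𝓝 0)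

/-- The stage algebras. -/
noncomputable def Dsub (n : ℕ) : NonUnitalStarSubalgebra ℂ (Amb Bn) where
  carrier := {z | DCond Bn n z}
  zero_mem' := by
    refine ⟨fun m _ => ?_, fun m _ => ?_, ?_, ?_⟩
    · simp
    · simp
    · simp only [Prod.fst_zero, Prod.snd_zero, lp_zero_apply, sub_zero, norm_zero]
      exact tendsto_const_nhds
    · simp only [Prod.fst_zero, Prod.snd_zero, lp_zero_apply, lineCM_zero_zero, sub_zero,
        norm_zero]
      exact tendsto_const_nhds
  add_mem' := by
    rintro z w ⟨hz1, hz2, hz3, hz4⟩ ⟨hw1, hw2, hw3, hw4⟩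
    refine ⟨fun m hm => ?_, fun m hm => ?_, ?_, ?_⟩
    · simp only [Prod.fst_add, Prod.snd_add, lp_add_apply, ContinuousMap.add_apply]
      rw [(hz1 m hm).1, (hw1 m hm).1, (hz1 m hm).2, (hw1 m hm).2]
      exact ⟨rfl, rfl⟩
    · simp only [Prod.snd_add, lp_add_apply, hz2 m hm, hw2 m hm, add_zero]
    · have h := hz3.add hw3
      rw [add_zero] at h
      refine squeeze_zero (fun m => norm_nonneg _) (fun m => ?_) h
      simp only [Prod.fst_add, Prod.snd_add, lp_add_apply]
      refine le_trans (le_of_eq (congrArg norm ?_)) (norm_add_le _ _)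
      abel
    · have h := hz4.add hw4
      rw [add_zero] at h
      refine squeeze_zero (fun m => norm_nonneg _) (fun m => ?_) h
      simp only [Prod.fst_add, Prod.snd_add, lp_add_apply, lineCM_add]
      refine le_trans (le_of_eq (congrArg norm ?_)) (norm_add_le _ _)
      abel
  mul_mem' := by
    rintro z w ⟨hz1, hz2, hz3, hz4⟩ ⟨hw1, hw2, hw3, hw4⟩
    refine ⟨fun m hm => ?_, fun m hm => ?_, ?_, ?_⟩
    · simp only [Prod.fst_mul, Prod.snd_mul, lp_mul_apply, ContinuousMap.mul_apply]
      rw [(hz1 m hm).1, (hw1 m hm).1, (hz1 m hm).2, (hw1 m hm).2]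
      exact ⟨rfl, rfl⟩
    · simp only [Prod.snd_mul, lp_mul_apply, hz2 m hm, zero_mul]
    · have h := (hz3.mul_const ‖w.1.1‖).add (hw3.const_mul ‖z.1.2‖)
      rw [zero_mul, mul_zero, add_zero] at h
      refine squeeze_zero (fun m => norm_nonneg _) (fun m => ?_) h
      simp only [Prod.fst_mul, Prod.snd_mul, lp_mul_apply]
      have e : z.1.1 m * w.1.1 m - z.1.2 m * w.1.2 m
          = (z.1.1 m - z.1.2 m) * w.1.1 m + z.1.2 m * (w.1.1 m - w.1.2 m) := by
        rw [sub_mul, mul_sub]; abel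
      rw [e]
      refine le_trans (norm_add_le _ _) (add_le_add ?_ ?_)
      · exact le_trans (norm_mul_le _ _) (by gcongr; exact norm_lp_apply_le _ _)
      · exact le_trans (norm_mul_le _ _) (by gcongr; exact norm_lp_apply_le _ _)
    · have h := ((hz4.mul_const ‖w.2‖).add
        (hw4.const_mul (max ‖z.1.1‖ ‖z.1.2‖))).add (hz3.mul hw3)
      rw [zero_mul, mul_zero, add_zero, zero_mul, add_zero] at h
      refine squeeze_zero (fun m => norm_nonneg _) (fun m => ?_) h
      simp only [Prod.fst_mul, Prod.snd_mul, lp_mul_apply]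
      have e : z.2 m * w.2 m - lineCM (z.1.1 m * w.1.1 m) (z.1.2 m * w.1.2 m)
          = (z.2 m - lineCM (z.1.1 m) (z.1.2 m)) * w.2 m
            + lineCM (z.1.1 m) (z.1.2 m) * (w.2 m - lineCM (w.1.1 m) (w.1.2 m))
            + (lineCM (z.1.1 m) (z.1.2 m) * lineCM (w.1.1 m) (w.1.2 m)
                - lineCM (z.1.1 m * w.1.1 m) (z.1.2 m * w.1.2 m)) := by
        rw [sub_mul, mul_sub]; abel
      rw [e]
      refine le_trans (norm_add_le _ _) (add_le_add (le_trans (norm_add_le _ _)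
        (add_le_add ?_ ?_)) ?_)
      · exact le_trans (norm_mul_le _ _) (by gcongr; exact norm_lp_apply_le _ _)
      · refine le_trans (norm_mul_le _ _) ?_
        exact mul_le_mul
          (le_trans (norm_lineCM_le _ _)
            (max_le_max (norm_lp_apply_le _ _) (norm_lp_apply_le _ _)))
          le_rfl (norm_nonneg _) (le_max_iff.2 (Or.inl (norm_nonneg _)))
      · exact norm_lineCM_mul _ _ _ _
  smul_mem' := by
    rintro c z ⟨hz1, hz2, hz3, hz4⟩
    refine ⟨fun m hm => ?_, fun m hm => ?_, ?_, ?_⟩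
    · simp only [Prod.smul_fst, Prod.smul_snd, lp_smul_apply, ContinuousMap.smul_apply]
      rw [(hz1 m hm).1, (hz1 m hm).2]
      exact ⟨rfl, rfl⟩
    · simp only [Prod.smul_snd, lp_smul_apply, hz2 m hm, smul_zero]
    · have h := hz3.const_mul ‖c‖
      rw [mul_zero] at h
      refine squeeze_zero (fun m => norm_nonneg _) (fun m => ?_) h
      simp only [Prod.smul_fst, Prod.smul_snd, lp_smul_apply, ← smul_sub, norm_smul]
      exact le_rfl
    · have h := hz4.const_mul ‖c‖
      rw [mul_zero] at h
      refine squeeze_zero (fun m => norm_nonneg _) (fun m => ?_) h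
      simp only [Prod.smul_fst, Prod.smul_snd, lp_smul_apply, lineCM_smul, ← smul_sub,
        norm_smul]
      exact le_rfl
  star_mem' := by
    rintro z ⟨hz1, hz2, hz3, hz4⟩
    refine ⟨fun m hm => ?_, fun m hm => ?_, ?_, ?_⟩
    · simp only [Prod.fst_star, Prod.snd_star, lp_star_apply, ContinuousMap.star_apply]
      rw [(hz1 m hm).1, (hz1 m hm).2]
      exact ⟨rfl, rfl⟩
    · simp only [Prod.snd_star, lp_star_apply, hz2 m hm, star_zero]
    · refine hz3.congr fun m => ?_
      simp only [Prod.fst_star, Prod.snd_star, lp_star_apply, ← star_sub, norm_star]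
    · refine hz4.congr fun m => ?_
      simp only [Prod.fst_star, Prod.snd_star, lp_star_apply, lineCM_star, ← star_sub,
        norm_star]

theorem mem_Dsub {n : ℕ} {z : Amb Bn} : z ∈ Dsub Bn n ↔ DCond Bn n z := Iff.rfl

instance isClosed_Dsub (n : ℕ) : IsClosed ((Dsub Bn n : Set (Amb Bn))) := by
  have hev : ∀ m : ℕ, Continuous fun z : Amb Bn => z.2 m :=
    fun m => (continuous_lpApply m).comp continuous_snd
  have hx : ∀ m : ℕ, Continuous fun z : Amb Bn => z.1.1 m :=
    fun m => (continuous_lpApply m).comp (continuous_fst.comp continuous_fst)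
  have hy : ∀ m : ℕ, Continuous fun z : Amb Bn => z.1.2 m :=
    fun m => (continuous_lpApply m).comp (continuous_snd.comp continuous_fst)
  have e : (Dsub Bn n : Set (Amb Bn)) =
      ((⋂ m, {z : Amb Bn | n ≤ m → ((z.2 m) 0 = z.1.1 m ∧ (z.2 m) 1 = z.1.2 m)}) ∩
        (⋂ m, {z : Amb Bn | m < n → z.2 m = 0})) ∩
      ({z : Amb Bn | Tendsto (fun m => ‖z.1.1 m - z.1.2 m‖) atTop (𝓝 0)} ∩
        {z : Amb Bn | Tendsto (fun m => ‖z.2 m - lineCM (z.1.1 m) (z.1.2 m)‖) atTop (𝓝 0)}) := by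
    ext z
    simp only [Set.mem_inter_iff, Set.mem_iInter, Set.mem_setOf_eq]
    exact ⟨fun ⟨h1, h2, h3, h4⟩ => ⟨⟨fun m h => h1 m h, fun m h => h2 m h⟩, h3, h4⟩,
      fun ⟨⟨h1, h2⟩, h3, h4⟩ => ⟨fun m h => h1 m h, fun m h => h2 m h, h3, h4⟩⟩
  rw [e]
  refine IsClosed.inter (IsClosed.inter ?_ ?_) (IsClosed.inter ?_ ?_)
  · refine isClosed_iInter fun m => ?_
    by_cases hm : n ≤ m
    · have : {z : Amb Bn | n ≤ m → ((z.2 m) 0 = z.1.1 m ∧ (z.2 m) 1 = z.1.2 m)}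
          = {z : Amb Bn | (z.2 m) 0 = z.1.1 m} ∩ {z : Amb Bn | (z.2 m) 1 = z.1.2 m} := by
        ext z; simp [hm, Set.mem_setOf_eq]
      rw [this]
      exact (isClosed_eq ((continuous_eval_const _).comp (hev m)) (hx m)).inter
        (isClosed_eq ((continuous_eval_const _).comp (hev m)) (hy m))
    · have : {z : Amb Bn | n ≤ m → ((z.2 m) 0 = z.1.1 m ∧ (z.2 m) 1 = z.1.2 m)} = Set.univ := by
        ext z; simp [hm]
      rw [this]; exact isClosed_univ
  · refine isClosed_iInter fun m => ?_
    by_cases hm : m < n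
    · have : {z : Amb Bn | m < n → z.2 m = 0} = {z : Amb Bn | z.2 m = 0} := by
        ext z; simp [hm]
      rw [this]; exact isClosed_eq (hev m) continuous_const
    · have : {z : Amb Bn | m < n → z.2 m = 0} = Set.univ := by ext z; simp [hm]
      rw [this]; exact isClosed_univ
  · refine isClosed_tendstoZero (fun (m : ℕ) (z : Amb Bn) => ‖z.1.1 m - z.1.2 m‖) 2 two_pos
      (fun m z w => ?_) (fun m z => norm_nonneg _)
    show ‖z.1.1 m - z.1.2 m‖ ≤ ‖w.1.1 m - w.1.2 m‖ + 2 * dist z w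
    refine le_trans (norm_le_add_sub _ (w.1.1 m - w.1.2 m)) ?_
    have e2 : z.1.1 m - z.1.2 m - (w.1.1 m - w.1.2 m)
        = (z.1.1 m - w.1.1 m) - (z.1.2 m - w.1.2 m) := by abel
    rw [e2]
    have h1 := dist_x_le Bn z w m
    have h2 := dist_y_le Bn z w m
    have := norm_sub_le (z.1.1 m - w.1.1 m) (z.1.2 m - w.1.2 m)
    linarith
  · refine isClosed_tendstoZero
      (fun (m : ℕ) (z : Amb Bn) => ‖z.2 m - lineCM (z.1.1 m) (z.1.2 m)‖) 2 two_pos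
      (fun m z w => ?_) (fun m z => norm_nonneg _)
    show ‖z.2 m - lineCM (z.1.1 m) (z.1.2 m)‖
      ≤ ‖w.2 m - lineCM (w.1.1 m) (w.1.2 m)‖ + 2 * dist z w
    refine le_trans (norm_le_add_sub _ (w.2 m - lineCM (w.1.1 m) (w.1.2 m))) ?_
    have e2 : z.2 m - lineCM (z.1.1 m) (z.1.2 m) - (w.2 m - lineCM (w.1.1 m) (w.1.2 m))
        = (z.2 m - w.2 m) - (lineCM (z.1.1 m) (z.1.2 m) - lineCM (w.1.1 m) (w.1.2 m)) := by
      abel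
    rw [e2]
    have h1 := dist_f_le Bn z w m
    have h2 : ‖lineCM (z.1.1 m) (z.1.2 m) - lineCM (w.1.1 m) (w.1.2 m)‖ ≤ dist z w := by
      rw [lineCM_sub]
      exact le_trans (norm_lineCM_le _ _) (max_le (dist_x_le Bn z w m) (dist_y_le Bn z w m))
    have := norm_sub_le (z.2 m - w.2 m)
      (lineCM (z.1.1 m) (z.1.2 m) - lineCM (w.1.1 m) (w.1.2 m))
    linarith

example (n : ℕ) : NonUnitalCStarAlgebra ↥(Dsub Bn n) := inferInstance
example : NonUnitalCStarAlgebra ↥(Lsub Bn) := inferInstance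
example (n : ℕ) (z : ↥(Dsub Bn n)) : ‖z‖ = ‖(z : Amb Bn)‖ := rfl

/-! ### The connecting and limit homomorphisms -/

noncomputable def zeroOut (n : ℕ) (f : PC Bn) : PC Bn :=
  ⟨fun m => if m = n then 0 else f m, memℓp_infty ⟨‖f‖, by
    rintro r ⟨m, rfl⟩
    by_cases hm : m = n
    · simp [hm]
    · simp only [hm, if_false]
      exact norm_lp_apply_le _ _⟩⟩

@[simp] theorem zeroOut_apply (n m : ℕ) (f : PC Bn) :
    zeroOut Bn n f m = if m = n then 0 else f m := rfl

noncomputable def zeroBelow (k : ℕ) (f : PC Bn) : PC Bn :=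
  ⟨fun m => if m < k then 0 else f m, memℓp_infty ⟨‖f‖, by
    rintro r ⟨m, rfl⟩
    by_cases hm : m < k
    · simp [hm]
    · simp only [hm, if_false]
      exact norm_lp_apply_le _ _⟩⟩

@[simp] theorem zeroBelow_apply (k m : ℕ) (f : PC Bn) :
    zeroBelow Bn k f m = if m < k then 0 else f m := rfl

noncomputable def βhom (n : ℕ) : ↥(Dsub Bn n) →⋆ₙₐ[ℂ] ↥(Dsub Bn (n+1)) where
  toFun z := ⟨((z : Amb Bn).1, zeroOut Bn n (z : Amb Bn).2), by
    obtain ⟨h1, h2, h3, h4⟩ := z.2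
    refine ⟨fun m hm => ?_, fun m hm => ?_, h3, ?_⟩
    · have hmn : m ≠ n := by omega
      simpa only [zeroOut_apply, hmn, if_false] using h1 m (by omega)
    · by_cases hmn : m = n
      · simp [hmn]
      · simp only [zeroOut_apply, hmn, if_false]
        exact h2 m (by omega)
    · refine h4.congr' ?_
      filter_upwards [eventually_ge_atTop (n+1)] with m hm
      have hmn : m ≠ n := by omega
      simp [hmn]⟩
  map_smul' c z := Subtype.ext (Prod.ext rfl (lp.ext (funext fun m => by
    by_cases hm : m = n <;> simp [hm])))
  map_zero' := Subtype.ext (Prod.ext rfl (lp.ext (funext fun m => by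
    by_cases hm : m = n <;> simp [hm])))
  map_add' z w := Subtype.ext (Prod.ext rfl (lp.ext (funext fun m => by
    by_cases hm : m = n <;> simp [hm])))
  map_mul' z w := Subtype.ext (Prod.ext rfl (lp.ext (funext fun m => by
    by_cases hm : m = n <;> simp [hm])))
  map_star' z := Subtype.ext (Prod.ext rfl (lp.ext (funext fun m => by
    by_cases hm : m = n <;> simp [hm])))

noncomputable def ιhom (n : ℕ) : ↥(Dsub Bn n) →⋆ₙₐ[ℂ] ↥(Lsub Bn) where
  toFun z := ⟨(z : Amb Bn).1, z.2.2.2.1⟩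
  map_smul' _ _ := Subtype.ext rfl
  map_zero' := Subtype.ext rfl
  map_add' _ _ := Subtype.ext rfl
  map_mul' _ _ := Subtype.ext rfl
  map_star' _ := Subtype.ext rfl

theorem βhom_surjective (n : ℕ) : Function.Surjective (βhom Bn n) := by
  rintro w
  obtain ⟨h1, h2, h3, h4⟩ := w.2
  set g : C(unitInterval, Bn n) := lineCM ((w : Amb Bn).1.1 n) ((w : Amb Bn).1.2 n) with hg
  have hmem : Memℓp (Function.update (⇑(w : Amb Bn).2) n g) ⊤ := by
    apply memℓp_infty
    refine ⟨max ‖(w : Amb Bn).2‖ (max ‖(w : Amb Bn).1.1‖ ‖(w : Amb Bn).1.2‖), ?_⟩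
    rintro r ⟨m, rfl⟩
    dsimp only
    rcases eq_or_ne m n with hm | hm
    · subst hm
      rw [Function.update_self]
      exact le_trans (le_trans (norm_lineCM_le _ _)
        (max_le_max (norm_lp_apply_le _ _) (norm_lp_apply_le _ _))) (le_max_right _ _)
    · rw [Function.update_of_ne hm]
      exact le_trans (norm_lp_apply_le _ _) (le_max_left _ _)
  set f' : PC Bn := ⟨Function.update (⇑(w : Amb Bn).2) n g, hmem⟩ with hf'
  have hf'app : ∀ m, f' m = Function.update (⇑(w : Amb Bn).2) n g m := fun m => rfl
  have hDmem : (((w : Amb Bn).1, f') : Amb Bn) ∈ Dsub Bn n := by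
    refine ⟨fun m hm => ?_, fun m hm => ?_, h3, ?_⟩
    · show (f' m) 0 = (w : Amb Bn).1.1 m ∧ (f' m) 1 = (w : Amb Bn).1.2 m
      rcases eq_or_ne m n with hmn | hmn
      · subst hmn
        rw [hf'app, Function.update_self, hg]
        exact ⟨lineCM_zero _ _, lineCM_one _ _⟩
      · rw [hf'app, Function.update_of_ne hmn]
        exact h1 m (by omega)
    · show f' m = 0
      have hmn : m ≠ n := by omega
      rw [hf'app, Function.update_of_ne hmn]
      exact h2 m (by omega)
    · show Tendsto (fun m => ‖f' m - lineCM ((w : Amb Bn).1.1 m) ((w : Amb Bn).1.2 m)‖)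
        atTop (𝓝 0)
      refine h4.congr' ?_
      filter_upwards [eventually_ge_atTop (n+1)] with m hm
      have hmn : m ≠ n := by omega
      rw [hf'app, Function.update_of_ne hmn]
  refine ⟨⟨((w : Amb Bn).1, f'), hDmem⟩, ?_⟩
  refine Subtype.ext (Prod.ext rfl (lp.ext (funext fun m => ?_)))
  show (if m = n then 0 else f' m) = (w : Amb Bn).2 m
  rcases eq_or_ne m n with hmn | hmn
  · subst hmn
    rw [if_pos rfl]
    exact (h2 m (by omega)).symm
  · rw [if_neg hmn, hf'app, Function.update_of_ne hmn]

theorem transit_val {n m : ℕ} (h : n ≤ m) (z : ↥(Dsub Bn n)) :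
    ((transit (A := fun k => ↥(Dsub Bn k)) (fun k => βhom Bn k) h z : ↥(Dsub Bn m)) : Amb Bn)
      = ((z : Amb Bn).1, zeroBelow Bn m (z : Amb Bn).2) := by
  induction m, h using Nat.le_induction with
  | base =>
      unfold transit
      rw [Nat.leRecOn_self]
      refine Prod.ext rfl (lp.ext (funext fun i => ?_))
      show (z : Amb Bn).2 i = if i < n then 0 else (z : Amb Bn).2 i
      by_cases hi : i < n
      · rw [if_pos hi, z.2.2.1 i hi]
      · rw [if_neg hi]
  | succ m hm ih =>
      unfold transit at ih ⊢
      rw [Nat.leRecOn_succ hm]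
      have e : ((βhom Bn m) (Nat.leRecOn hm (fun {k} x => βhom Bn k x) z) : Amb Bn)
          = (((Nat.leRecOn hm (fun {k} x => βhom Bn k x) z : ↥(Dsub Bn m)) : Amb Bn).1,
             zeroOut Bn m ((Nat.leRecOn hm (fun {k} x => βhom Bn k x) z : ↥(Dsub Bn m)) : Amb Bn).2) := rfl
      rw [e, ih]
      refine Prod.ext rfl (lp.ext (funext fun i => ?_))
      show (if i = m then 0 else (zeroBelow Bn m (z : Amb Bn).2) i)
          = if i < m + 1 then 0 else (z : Amb Bn).2 i
      rcases eq_or_ne i m with h1 | h1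
      · subst h1; simp
      · rw [if_neg h1, zeroBelow_apply]
        by_cases h2 : i < m
        · rw [if_pos h2, if_pos (by omega)]
        · rw [if_neg h2, if_neg (by omega)]

theorem isIndLimit : IsInductiveLimit (A := fun n => ↥(Dsub Bn n)) (fun n => βhom Bn n) ↥(Lsub Bn) (fun n => ιhom Bn n) := by
  refine ⟨fun n => DFunLike.ext _ _ fun z => Subtype.ext rfl, ?_, ?_⟩
  · -- density: `ι 0` is surjective
    have hsurj : ∀ w : ↥(Lsub Bn), ∃ z : ↥(Dsub Bn 0), ιhom Bn 0 z = w := by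
      intro w
      have hmem : Memℓp (fun m => lineCM ((w : PB Bn × PB Bn).1 m) ((w : PB Bn × PB Bn).2 m)) ⊤ := by
        apply memℓp_infty
        refine ⟨max ‖(w : PB Bn × PB Bn).1‖ ‖(w : PB Bn × PB Bn).2‖, ?_⟩
        rintro r ⟨m, rfl⟩
        exact le_trans (norm_lineCM_le _ _)
          (max_le_max (norm_lp_apply_le _ _) (norm_lp_apply_le _ _))
      refine ⟨⟨((w : PB Bn × PB Bn), ⟨_, hmem⟩), ⟨fun m _ => ?_, fun m hm => absurd hm (Nat.not_lt_zero m), w.2, ?_⟩⟩, Subtype.ext rfl⟩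
      · exact ⟨lineCM_zero _ _, lineCM_one _ _⟩
      · refine tendsto_const_nhds.congr fun m => ?_
        show (0:ℝ) = ‖_ - _‖
        rw [show ((⟨_, hmem⟩ : PC Bn) m) = lineCM ((w : PB Bn × PB Bn).1 m) ((w : PB Bn × PB Bn).2 m) from rfl]
        rw [sub_self, norm_zero]
    have : (⋃ n, Set.range ⇑(ιhom Bn n)) = Set.univ := by
      refine Set.eq_univ_of_forall fun w => Set.mem_iUnion.2 ⟨0, ?_⟩
      obtain ⟨z, hz⟩ := hsurj w
      exact ⟨z, hz⟩
    rw [this]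
    exact dense_univ
  · intro n z
    have hnorm : ∀ m, ‖transit (A := fun k => ↥(Dsub Bn k)) (fun k => βhom Bn k) (Nat.le_add_right n m) z‖
        = max ‖(z : Amb Bn).1‖ ‖zeroBelow Bn (n+m) (z : Amb Bn).2‖ := by
      intro m
      have : ‖transit (A := fun k => ↥(Dsub Bn k)) (fun k => βhom Bn k) (Nat.le_add_right n m) z‖
          = ‖((transit (A := fun k => ↥(Dsub Bn k)) (fun k => βhom Bn k) (Nat.le_add_right n m) z : ↥(Dsub Bn (n+m))) : Amb Bn)‖ := rfl
      rw [this, transit_val, Prod.norm_def]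
    have hιnorm : ‖(ιhom Bn n) z‖ = ‖(z : Amb Bn).1‖ := rfl
    rw [Metric.tendsto_atTop]
    intro ε hε
    have h4 := z.2.2.2.2
    rw [Metric.tendsto_atTop] at h4
    obtain ⟨K, hK⟩ := h4 (ε/2) (by positivity)
    refine ⟨K, fun k hk => ?_⟩
    set M := ‖(z : Amb Bn).1‖ with hM
    have hM0 : 0 ≤ M := norm_nonneg _
    have hQ : ‖zeroBelow Bn (n+k) (z : Amb Bn).2‖ ≤ M + ε/2 := by
      refine lp.norm_le_of_forall_le (by positivity) fun i => ?_
      by_cases hi : i < n + k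
      · simp [hi]
        positivity
      · rw [show (zeroBelow Bn (n+k) (z : Amb Bn).2) i = (z : Amb Bn).2 i from by
          rw [zeroBelow_apply, if_neg hi]]
        have hiK : K ≤ i := by omega
        have hlt : ‖(z : Amb Bn).2 i - lineCM ((z : Amb Bn).1.1 i) ((z : Amb Bn).1.2 i)‖ < ε/2 := by
          have := hK i hiK
          rwa [Real.dist_eq, sub_zero, abs_of_nonneg (norm_nonneg _)] at this
        have hline : ‖lineCM ((z : Amb Bn).1.1 i) ((z : Amb Bn).1.2 i)‖ ≤ M := by
          refine le_trans (norm_lineCM_le _ _) ?_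
          rw [hM, Prod.norm_def]
          exact max_le_max (norm_lp_apply_le _ _) (norm_lp_apply_le _ _)
        calc ‖(z : Amb Bn).2 i‖
            ≤ ‖lineCM ((z : Amb Bn).1.1 i) ((z : Amb Bn).1.2 i)‖
              + ‖(z : Amb Bn).2 i - lineCM ((z : Amb Bn).1.1 i) ((z : Amb Bn).1.2 i)‖ :=
              norm_le_add_sub _ _
          _ ≤ M + ε/2 := by linarith
    rw [hnorm, hιnorm, Real.dist_eq]
    have hge : M ≤ max M ‖zeroBelow Bn (n+k) (z : Amb Bn).2‖ := le_max_left _ _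
    have hle2 : max M ‖zeroBelow Bn (n+k) (z : Amb Bn).2‖ ≤ M + ε/2 :=
      max_le (by linarith) hQ
    rw [abs_of_nonneg (by linarith)]
    linarith

end Construction



/-! ### The homomorphism into the limit, and extraction of homotopies -/

section Phi

variable {A : Type u} [NonUnitalCStarAlgebra A]
variable (Bn : ℕ → Type u) [∀ n, NonUnitalCStarAlgebra (Bn n)]

noncomputable def seqInPB (Φ : ∀ n, A →⋆ₙₐ[ℂ] Bn n) (a : A) : PB Bn :=
  ⟨fun m => Φ m a, memℓp_infty ⟨‖a‖, by
    rintro r ⟨m, rfl⟩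
    exact NonUnitalStarAlgHom.norm_apply_le _ _⟩⟩

@[simp] theorem seqInPB_apply (Φ : ∀ n, A →⋆ₙₐ[ℂ] Bn n) (a : A) (m : ℕ) :
    seqInPB Bn Φ a m = Φ m a := rfl

noncomputable def PhiL (Φ Ψ : ∀ n, A →⋆ₙₐ[ℂ] Bn n)
    (hc : ∀ a, Tendsto (fun n => ‖Φ n a - Ψ n a‖) atTop (𝓝 0)) :
    A →⋆ₙₐ[ℂ] ↥(Lsub Bn) where
  toFun a := ⟨(seqInPB Bn Φ a, seqInPB Bn Ψ a), hc a⟩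
  map_smul' c a := Subtype.ext (Prod.ext
    (lp.ext (funext fun m => by simp [map_smul]))
    (lp.ext (funext fun m => by simp [map_smul])))
  map_zero' := Subtype.ext (Prod.ext
    (lp.ext (funext fun m => by simp))
    (lp.ext (funext fun m => by simp)))
  map_add' a b := Subtype.ext (Prod.ext
    (lp.ext (funext fun m => by simp [map_add]))
    (lp.ext (funext fun m => by simp [map_add])))
  map_mul' a b := Subtype.ext (Prod.ext
    (lp.ext (funext fun m => by simp [map_mul]))
    (lp.ext (funext fun m => by simp [map_mul])))
  map_star' a := Subtype.ext (Prod.ext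
    (lp.ext (funext fun m => by simp [map_star]))
    (lp.ext (funext fun m => by simp [map_star])))

noncomputable def evHom (n : ℕ) : ↥(Dsub Bn n) →⋆ₙₐ[ℂ] C(unitInterval, Bn n) where
  toFun z := (z : Amb Bn).2 n
  map_smul' c z := lp_smul_apply c _ n
  map_zero' := lp_zero_apply n
  map_add' z w := lp_add_apply _ _ n
  map_mul' z w := lp_mul_apply _ _ n
  map_star' z := lp_star_apply _ n

end Phi

section Key

variable {A₀ A : Type u} [NonUnitalCStarAlgebra A₀] [NonUnitalCStarAlgebra A]

theorem exists_homotopic (Bn : ℕ → Type u) (instBn : ∀ n, NonUnitalCStarAlgebra (Bn n))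
    (Φ Ψ : ∀ n, A →⋆ₙₐ[ℂ] Bn n)
    (hc : ∀ a, Tendsto (fun n => ‖Φ n a - Ψ n a‖) atTop (𝓝 0))
    (α : A₀ →⋆ₙₐ[ℂ] A) (hα : IsSemiprojective.{u} α) :
    ∃ n, HomHomotopic ((Φ n).comp α) ((Ψ n).comp α) := by
  obtain ⟨n, H, hH⟩ := hα (fun n => ↥(Dsub Bn n)) (fun n => βhom Bn n) ↥(Lsub Bn)
    (fun n => ιhom Bn n) (fun n => βhom_surjective Bn n) (isIndLimit Bn) (PhiL Bn Φ Ψ hc)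
  refine ⟨n, (evHom Bn n).comp H, fun a => ?_, fun a => ?_⟩
  · have h := DFunLike.congr_fun hH a
    have hval := congrArg Subtype.val h
    have hx : (H a : Amb Bn).1.1 = seqInPB Bn Φ (α a) := congrArg Prod.fst hval
    have hx' : (H a : Amb Bn).1.1 n = Φ n (α a) :=
      congrFun (congrArg (fun q : PB Bn => (q : ∀ m, Bn m)) hx) n
    have hC1 := (H a).2.1 n le_rfl
    show ((H a : Amb Bn).2 n) 0 = Φ n (α a)
    rw [hC1.1, hx']
  · have h := DFunLike.congr_fun hH a
    have hval := congrArg Subtype.val h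
    have hy : (H a : Amb Bn).1.2 = seqInPB Bn Ψ (α a) := congrArg Prod.snd hval
    have hy' : (H a : Amb Bn).1.2 n = Ψ n (α a) :=
      congrFun (congrArg (fun q : PB Bn => (q : ∀ m, Bn m)) hy) n
    have hC1 := (H a).2.1 n le_rfl
    show ((H a : Amb Bn).2 n) 1 = Ψ n (α a)
    rw [hC1.2, hy']

end Key

end Stmt3Aux


/-- Homotopy stability for semiprojective ⋆-homomorphisms. -/
theorem stmt_3 {A₀ A : Type u} [NonUnitalCStarAlgebra A₀] [NonUnitalCStarAlgebra A]
    [SeparableSpace A₀] [SeparableSpace A]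
    (α : A₀ →⋆ₙₐ[ℂ] A) (hα : IsSemiprojective.{u} α) :
    ∃ (G : Finset A) (δ : ℝ), 0 < δ ∧
      ∀ (B : Type u) [NonUnitalCStarAlgebra B] (φ ψ : A →⋆ₙₐ[ℂ] B),
        (∀ a ∈ G, ‖φ a - ψ a‖ < δ) → HomHomotopic (φ.comp α) (ψ.comp α) := by
  classical
  by_contra hcon
  have hne : Nonempty A := ⟨0⟩
  set u : ℕ → A := TopologicalSpace.denseSeq A with hu
  have hcon' : ∀ (G : Finset A) (δ : ℝ), 0 < δ → ∃ (B : Type u) (_ : NonUnitalCStarAlgebra B)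
      (φ ψ : A →⋆ₙₐ[ℂ] B), (∀ a ∈ G, ‖φ a - ψ a‖ < δ) ∧
        ¬ HomHomotopic (φ.comp α) (ψ.comp α) := by
    intro G δ hδ
    by_contra hno
    push_neg at hno
    exact hcon ⟨G, δ, hδ, fun B instB φ ψ hcl => hno B instB φ ψ hcl⟩
  have hex : ∀ n : ℕ, ∃ (B : Type u) (_ : NonUnitalCStarAlgebra B)
      (φ ψ : A →⋆ₙₐ[ℂ] B),
        (∀ a ∈ (Finset.range (n+1)).image u, ‖φ a - ψ a‖ < 1/(n+1)) ∧
        ¬ HomHomotopic (φ.comp α) (ψ.comp α) :=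
    fun n => hcon' _ _ (by positivity)
  choose Bn instBn φn ψn hclose hnot using hex
  have hptwise : ∀ a, Tendsto (fun n => ‖φn n a - ψn n a‖) atTop (𝓝 0) := by
    intro a
    rw [Metric.tendsto_atTop]
    intro ε hε
    obtain ⟨k, hk⟩ := (TopologicalSpace.denseRange_denseSeq A).exists_dist_lt a
      (show (0:ℝ) < ε/4 by positivity)
    obtain ⟨N, hN⟩ := exists_nat_one_div_lt (show (0:ℝ) < ε/4 by positivity)
    refine ⟨max k N, fun n hn => ?_⟩
    have hkn : k ≤ n := le_trans (le_max_left _ _) hn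
    have hNn : N ≤ n := le_trans (le_max_right _ _) hn
    have hmem : u k ∈ (Finset.range (n+1)).image u :=
      Finset.mem_image_of_mem u (Finset.mem_range.2 (by omega))
    have b2 : ‖φn n (u k) - ψn n (u k)‖ < ε/4 := by
      refine lt_of_lt_of_le (hclose n _ hmem) (le_trans ?_ hN.le)
      apply one_div_le_one_div_of_le
      · positivity
      · push_cast
        exact add_le_add (Nat.cast_le.2 hNn) le_rfl
    have b1 : ‖φn n a - φn n (u k)‖ < ε/4 := by
      rw [← map_sub]
      refine lt_of_le_of_lt (NonUnitalStarAlgHom.norm_apply_le _ _) ?_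
      rwa [← dist_eq_norm]
    have b3 : ‖ψn n (u k) - ψn n a‖ < ε/4 := by
      rw [← map_sub]
      refine lt_of_le_of_lt (NonUnitalStarAlgHom.norm_apply_le _ _) ?_
      rwa [← dist_eq_norm, dist_comm]
    have tri : ‖φn n a - ψn n a‖ ≤ ‖φn n a - φn n (u k)‖
        + ‖φn n (u k) - ψn n (u k)‖ + ‖ψn n (u k) - ψn n a‖ := by
      have e : φn n a - ψn n a = (φn n a - φn n (u k)) + (φn n (u k) - ψn n (u k))
          + (ψn n (u k) - ψn n a) := by abel
      rw [e]
      exact norm_add₃_le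
    rw [Real.dist_eq, sub_zero, abs_of_nonneg (norm_nonneg _)]
    linarith
  obtain ⟨n, hh⟩ := Stmt3Aux.exists_homotopic Bn instBn φn ψn hptwise α hα
  exact hnot n hh
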